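/- Fix c > 1. For each prime p, the series E_p := ∑_{m=0}^∞ T_{m log p} converges in operator norm on H_c and satisfies E_p = (I − T_{log p})^{−1}; moreover, if p_1 < p_2 < p_3 < ⋯ is the increasing enumeration of the primes, then the finite products E_{p_1} ∘ E_{p_2} ∘ ⋯ ∘ E_{p_k} converge in operator norm, as k → ∞, to the operator A = ∑_{n=1}^∞ T_{log n}. -/

import Mathlib

open MeasureTheory Filter Topology
open scoped ENNReal

/-- The weighted measure defining the Hilbert space `H_c = L²(ℝ, e^{−2ct} dt)`. -/
noncomputable def weightedMeasure (c : ℝ) : Measure ℝ :=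
  (volume : Measure ℝ).withDensity fun t => ENNReal.ofReal (Real.exp (-2 * c * t))

namespace QEP

variable {c : ℝ}

lemma density_meas (c : ℝ) : Measurable fun t : ℝ => ENNReal.ofReal (Real.exp (-2 * c * t)) := by
  fun_prop

lemma wac : weightedMeasure c ≪ volume := withDensity_absolutelyContinuous _ _

lemma vac : (volume : Measure ℝ) ≪ weightedMeasure c :=
  withDensity_absolutelyContinuous' (density_meas c).aemeasurable
    (ae_of_all _ fun t => by simp [ENNReal.ofReal_eq_zero, (Real.exp_pos _).not_ge])

lemma ae_weighted_iff {f g : ℝ → ℂ} :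
    f =ᵐ[weightedMeasure c] g ↔ f =ᵐ[volume] g :=
  ⟨fun h => vac.ae_eq h, fun h => wac.ae_eq h⟩

lemma qmp (h : ℝ) :
    Measure.QuasiMeasurePreserving (fun t => t - h) (weightedMeasure c) (weightedMeasure c) := by
  refine ⟨(measurable_id.sub measurable_const), ?_⟩
  have s1 : Measure.map (fun t => t - h) (weightedMeasure c)
      ≪ Measure.map (fun t => t - h) (volume : Measure ℝ) :=
    wac.map (measurable_id.sub measurable_const)
  have s2 : Measure.map (fun t => t - h) (volume : Measure ℝ) = volume := by
    simpa [sub_eq_add_neg] using map_add_right_eq_self (volume : Measure ℝ) (-h)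
  rw [s2] at s1
  exact s1.trans vac

lemma comp_sub_ae {f g : ℝ → ℂ} (h : f =ᵐ[weightedMeasure c] g) (a : ℝ) :
    (fun t => f (t - a)) =ᵐ[weightedMeasure c] fun t => g (t - a) :=
  h.comp_tendsto (qmp a).tendsto_ae

lemma lintegral_shift {φ : ℝ → ℝ≥0∞} (hφ : AEMeasurable φ (weightedMeasure c)) (h : ℝ) :
    ∫⁻ t, φ (t - h) ∂(weightedMeasure c)
      = ENNReal.ofReal (Real.exp (-2 * c * h)) * ∫⁻ t, φ t ∂(weightedMeasure c) := by
  set w : ℝ → ℝ≥0∞ := fun t => ENNReal.ofReal (Real.exp (-2 * c * t)) with hw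
  have h1 : ∫⁻ t, φ (t - h) ∂(weightedMeasure c)
      = ∫⁻ t, w t * φ (t - h) ∂(volume : Measure ℝ) := by
    rw [weightedMeasure]
    exact lintegral_withDensity_eq_lintegral_mul₀' (density_meas c).aemeasurable
      (hφ.comp_quasiMeasurePreserving (qmp h))
  have h2 : ∫⁻ t, w t * φ (t - h) ∂(volume : Measure ℝ)
      = ∫⁻ s, w (s + h) * φ s ∂(volume : Measure ℝ) := by
    rw [← lintegral_add_right_eq_self (fun x => w x * φ (x - h)) h]
    simp
  have h3 : ∀ s : ℝ, w (s + h) * φ s = ENNReal.ofReal (Real.exp (-2 * c * h)) * (w s * φ s) := by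
    intro s
    have : Real.exp (-2 * c * (s + h)) = Real.exp (-2 * c * h) * Real.exp (-2 * c * s) := by
      rw [← Real.exp_add]; ring_nf
    rw [hw]
    simp only [this, ENNReal.ofReal_mul (Real.exp_pos _).le]
    ring
  have h4 : ∫⁻ t, φ t ∂(weightedMeasure c) = ∫⁻ t, w t * φ t ∂(volume : Measure ℝ) := by
    rw [weightedMeasure]
    exact lintegral_withDensity_eq_lintegral_mul₀' (density_meas c).aemeasurable hφ
  rw [h1, h2, h4]
  simp only [h3]
  rw [lintegral_const_mul' _ _ ENNReal.ofReal_ne_top]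

end QEP

namespace QEP
open scoped NNReal

variable {c : ℝ}
variable {T : ℝ → Lp ℂ 2 (weightedMeasure c) →L[ℂ] Lp ℂ 2 (weightedMeasure c)}

lemma T_norm_apply (hT : ∀ (h : ℝ) (f : Lp ℂ 2 (weightedMeasure c)),
      (T h f : ℝ → ℂ) =ᵐ[weightedMeasure c] fun t => f (t - h))
    (h : ℝ) (f : Lp ℂ 2 (weightedMeasure c)) :
    ‖T h f‖ = Real.exp (-(c * h)) * ‖f‖ := by
  have hmeas : AEMeasurable (fun t => ‖f t‖ₑ ^ (2:ℝ)) (weightedMeasure c) :=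
    ((Lp.aestronglyMeasurable f).aemeasurable.enorm).pow_const _
  have key : eLpNorm (T h f) 2 (weightedMeasure c)
      = ENNReal.ofReal (Real.exp (-(c * h))) * eLpNorm f 2 (weightedMeasure c) := by
    rw [eLpNorm_congr_ae (hT h f)]
    rw [eLpNorm_eq_lintegral_rpow_enorm_toReal (by norm_num) (by norm_num),
        eLpNorm_eq_lintegral_rpow_enorm_toReal (by norm_num) (by norm_num)]
    have htoReal : (2 : ℝ≥0∞).toReal = (2:ℝ) := by norm_num
    rw [htoReal]
    rw [lintegral_shift hmeas h]
    rw [ENNReal.mul_rpow_of_nonneg _ _ (by norm_num : (0:ℝ) ≤ 1/2)]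
    congr 1
    rw [ENNReal.ofReal_rpow_of_pos (Real.exp_pos _), ← Real.exp_mul]
    ring_nf
  rw [Lp.norm_def, Lp.norm_def, key, ENNReal.toReal_mul,
    ENNReal.toReal_ofReal (Real.exp_pos _).le]
end QEP

namespace QEP
variable {c : ℝ}
variable {T : ℝ → Lp ℂ 2 (weightedMeasure c) →L[ℂ] Lp ℂ 2 (weightedMeasure c)}
variable (hT : ∀ (h : ℝ) (f : Lp ℂ 2 (weightedMeasure c)),
      (T h f : ℝ → ℂ) =ᵐ[weightedMeasure c] fun t => f (t - h))
include hT

lemma T_add (a b : ℝ) : T a * T b = T (a + b) := by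
  ext f
  have h2 := comp_sub_ae (hT b f) a
  exact ((hT a ((T b) f)).trans (h2.trans
    (Filter.EventuallyEq.of_eq (funext fun t => by rw [sub_sub])))).trans (hT (a + b) f).symm

lemma T_zero : T 0 = 1 := by
  ext f
  refine (hT 0 f).trans (Filter.EventuallyEq.of_eq (funext fun t => ?_))
  rw [sub_zero]; rfl

lemma T_pow (x : ℝ) (m : ℕ) : T ((m : ℝ) * x) = T x ^ m := by
  induction m with
  | zero => simpa using T_zero hT
  | succ n ih =>
      rw [pow_succ, ← ih, T_add hT]
      norm_num
      ring_nf

lemma T_norm_le (h : ℝ) : ‖T h‖ ≤ Real.exp (-(c * h)) :=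
  ContinuousLinearMap.opNorm_le_bound _ (Real.exp_pos _).le
    fun f => le_of_eq (T_norm_apply hT h f)

end QEP

section
variable {A : Type*} [NormedRing A] [NormedAlgebra ℂ A] [CompleteSpace A]

lemma euler_T_pow (T : ℝ → A) (hadd : ∀ a b, T a * T b = T (a + b)) (hzero : T 0 = 1)
    (x : ℝ) (m : ℕ) : T ((m : ℝ) * x) = T x ^ m := by
  induction m with
  | zero => simpa using hzero
  | succ n ih =>
      rw [pow_succ, ← ih, hadd]
      norm_num
      ring_nf

set_option maxHeartbeats 1000000 in
@[reducible]
noncomputable def eulerNCR (s : Subalgebra ℂ A) (h : ∀ x y : s, x * y = y * x) :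
    NormedCommRing s :=
  { Subalgebra.normedRing s with mul_comm := h }

lemma euler_main (c : ℝ) (hc : 1 < c) (T : ℝ → A)
    (hadd : ∀ a b, T a * T b = T (a + b)) (hzero : T 0 = 1)
    (hnorm : ∀ n : ℕ, n ≠ 0 → ‖T (Real.log n)‖ ≤ (n : ℝ) ^ (-c)) :
    Summable (fun n : ℕ => T (Real.log ((n : ℝ) + 1))) ∧
    Tendsto (fun k : ℕ => ((List.range k).map fun i =>
        ∑' m : ℕ, T ((m : ℝ) * Real.log (Nat.nth Nat.Prime i))).prod)
      atTop (𝓝 (∑' n : ℕ, T (Real.log ((n : ℝ) + 1)))) := by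
  classical
  have hc0 : (0:ℝ) < c := lt_trans one_pos hc
  -- the commutative closed subalgebra generated by the T r
  set S : Subalgebra ℂ A := (Algebra.adjoin ℂ (Set.range T)).topologicalClosure with hS
  have hmemT : ∀ r : ℝ, T r ∈ S := fun r =>
    (Algebra.adjoin ℂ (Set.range T)).le_topologicalClosure (Algebra.subset_adjoin ⟨r, rfl⟩)
  have hcomm : ∀ a b : ℝ, T a * T b = T b * T a := fun a b => by rw [hadd, hadd, add_comm]
  have hadj : ∀ x y : (Algebra.adjoin ℂ (Set.range T)), x * y = y * x := by
    rintro ⟨x, hx⟩ ⟨y, hy⟩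
    ext
    refine Algebra.commute_of_mem_adjoin_of_forall_mem_commute hy ?_
    rintro b ⟨s, rfl⟩
    exact (Algebra.commute_of_mem_adjoin_of_forall_mem_commute hx
      (by rintro a ⟨r, rfl⟩; exact hcomm s r)).symm
  have had : ∀ a ∈ (Algebra.adjoin ℂ (Set.range T) : Set A),
      ∀ b ∈ (Algebra.adjoin ℂ (Set.range T) : Set A), a * b = b * a := fun a ha b hb =>
    congr_arg Subtype.val (hadj ⟨a, ha⟩ ⟨b, hb⟩)
  have hcl := eqOn_closure₂ had continuous_mul (continuous_snd.mul continuous_fst)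
  have hSc : ∀ x y : S, x * y = y * x := by
    rintro ⟨x, hx⟩ ⟨y, hy⟩
    have hx' : x ∈ closure ((Algebra.adjoin ℂ (Set.range T) : Set A)) := by
      rw [← Subalgebra.topologicalClosure_coe]; exact hx
    have hy' : y ∈ closure ((Algebra.adjoin ℂ (Set.range T) : Set A)) := by
      rw [← Subalgebra.topologicalClosure_coe]; exact hy
    exact Subtype.ext (hcl x hx' y hy')
  letI : NormedCommRing S := eulerNCR S hSc
  haveI : CompleteSpace S := IsComplete.completeSpace_coe
    (Subalgebra.isClosed_topologicalClosure _).isComplete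
  -- the multiplicative function
  set f : ℕ → S := fun n => if h : n = 0 then 0 else ⟨T (Real.log n), hmemT _⟩ with hf
  have hfcoe : ∀ n : ℕ, n ≠ 0 → ((f n : A)) = T (Real.log n) := by
    intro n hn; simp [hf, hn]
  have hf0 : f 0 = 0 := by simp [hf]
  have hf1 : f 1 = 1 := by
    apply Subtype.ext
    rw [hfcoe 1 one_ne_zero]
    simpa using hzero
  have hmul : ∀ m n : ℕ, f (m * n) = f m * f n := by
    intro m n
    rcases eq_or_ne m 0 with rfl | hm
    · rw [Nat.zero_mul, hf0, zero_mul]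
    rcases eq_or_ne n 0 with rfl | hn
    · rw [Nat.mul_zero, hf0, mul_zero]
    apply Subtype.ext
    have hcm : ((f m * f n : S) : A) = (f m : A) * (f n : A) := rfl
    rw [hcm, hfcoe _ (Nat.mul_ne_zero hm hn), hfcoe _ hm, hfcoe _ hn, hadd]
    congr 1
    rw [Nat.cast_mul, Real.log_mul (by exact_mod_cast hm) (by exact_mod_cast hn)]
  have hnormS : ∀ n : ℕ, ‖f n‖ = ‖(f n : A)‖ := fun n => rfl
  have hbound : ∀ n : ℕ, ‖f n‖ ≤ (n : ℝ) ^ (-c) := by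
    intro n
    rcases eq_or_ne n 0 with rfl | hn
    · simp [hf0, Real.zero_rpow (neg_ne_zero.mpr (ne_of_gt hc0))]
    · rw [hnormS, hfcoe n hn]; exact hnorm n hn
  have hsummc : Summable (fun n : ℕ => (n : ℝ) ^ (-c)) :=
    Real.summable_nat_rpow.mpr (by linarith)
  have hsumnorm : Summable (fun n => ‖f n‖) :=
    Summable.of_nonneg_of_le (fun n => norm_nonneg _) hbound hsummc
  have hsumf : Summable f := hsumnorm.of_norm
  -- Euler product in S
  have hEP := EulerProduct.eulerProduct hf1 (fun {m n} _ => hmul m n) hsumnorm hf0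
  -- compose with the enumeration of primes
  have hmono : StrictMono (Nat.nth Nat.Prime) := Nat.nth_strictMono Nat.infinite_setOf_prime
  have htop : Tendsto (Nat.nth Nat.Prime) atTop atTop := hmono.tendsto_atTop
  have hEP2 := hEP.comp htop
  -- identify the finsets of primes
  have himg : ∀ k : ℕ, (Nat.nth Nat.Prime k).primesBelow
      = (Finset.range k).image (Nat.nth Nat.Prime) := by
    intro k
    ext p
    simp only [Nat.mem_primesBelow, Finset.mem_image, Finset.mem_range]
    constructor
    · rintro ⟨hlt, hp⟩
      refine ⟨Nat.count Nat.Prime p, ?_, Nat.nth_count hp⟩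
      have := Nat.nth_count (p := Nat.Prime) hp
      rw [← this] at hlt
      exact hmono.lt_iff_lt.mp hlt
    · rintro ⟨i, hik, rfl⟩
      exact ⟨hmono hik, Nat.nth_mem_of_infinite Nat.infinite_setOf_prime i⟩
  -- the coercion to A
  have hval : Continuous (Subtype.val : S → A) := continuous_subtype_val
  set V : S →+ A := AddMonoidHom.mk' Subtype.val (fun x y => rfl) with hV
  have hVmul : ∀ x y : S, V (x * y) = V x * V y := fun x y => rfl
  have hVone : V 1 = 1 := rfl
  -- coercion of the local factors
  have hgeo : ∀ p : ℕ, p.Prime → Summable (fun e : ℕ => f (p ^ e)) := by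
    intro p hp
    have hp1 : (1:ℝ) < (p:ℝ) := by exact_mod_cast hp.one_lt
    have hplt : (p:ℝ) ^ (-c) < 1 := Real.rpow_lt_one_of_one_lt_of_neg hp1 (by linarith)
    refine Summable.of_norm (Summable.of_nonneg_of_le (fun e => norm_nonneg _)
      (fun e => ?_) (summable_geometric_of_lt_one (Real.rpow_nonneg (by positivity) _) hplt))
    calc ‖f (p ^ e)‖ ≤ ((p ^ e : ℕ) : ℝ) ^ (-c) := hbound _
      _ = ((p:ℝ) ^ (-c)) ^ e := by
          rw [Nat.cast_pow, ← Real.rpow_natCast ((p:ℝ)) e, ← Real.rpow_natCast ((p:ℝ)^(-c)) e,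
            ← Real.rpow_mul (by positivity), ← Real.rpow_mul (by positivity)]
          ring_nf
  have hFS : ∀ p : ℕ, p.Prime →
      V (∑' e : ℕ, f (p ^ e)) = ∑' m : ℕ, T ((m : ℝ) * Real.log p) := by
    intro p hp
    rw [((hgeo p hp).hasSum.map V hval).tsum_eq.symm]
    congr 1
    funext e
    show ((f (p ^ e) : A)) = _
    rw [hfcoe _ (pow_ne_zero e hp.pos.ne')]
    congr 1
    rw [Nat.cast_pow, Real.log_pow]
  -- coercion of the full sum
  have hAsum : V (∑' n, f n) = ∑' n : ℕ, T (Real.log ((n:ℝ) + 1)) := by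
    rw [(hsumf.hasSum.map V hval).tsum_eq.symm]
    rw [Summable.tsum_eq_zero_add (hsumf.map V hval)]
    have : ∀ n : ℕ, V (f (n + 1)) = T (Real.log ((n:ℝ) + 1)) := by
      intro n
      show ((f (n+1) : A)) = _
      rw [hfcoe _ (Nat.succ_ne_zero n)]
      push_cast
      rfl
    simp only [Function.comp_apply, hf0, map_zero, zero_add, this]
  -- coercion of the partial products
  have hprod : ∀ k : ℕ, V (∏ p ∈ (Nat.nth Nat.Prime k).primesBelow, ∑' e : ℕ, f (p ^ e))
      = ((List.range k).map fun i =>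
          ∑' m : ℕ, T ((m : ℝ) * Real.log (Nat.nth Nat.Prime i))).prod := by
    intro k
    rw [himg k, Finset.prod_image (fun x _ y _ h => hmono.injective h)]
    induction k with
    | zero => simp [hVone]
    | succ n ih =>
        rw [Finset.prod_range_succ, hVmul, ih, List.range_succ, List.map_append,
          List.prod_append]
        simp only [List.map_cons, List.map_nil, List.prod_cons, List.prod_nil, mul_one]
        rw [hFS _ (Nat.nth_mem_of_infinite Nat.infinite_setOf_prime n)]
  constructor
  · -- summability in A
    refine Summable.of_norm (Summable.of_nonneg_of_le (fun n => norm_nonneg _) (fun n => ?_)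
      (hsummc.comp_injective Nat.succ_injective))
    have := hnorm (n+1) (Nat.succ_ne_zero n)
    simp only [Function.comp_apply, Nat.succ_eq_add_one]
    push_cast at this ⊢
    exact this
  · have := (hval.tendsto _).comp hEP2
    have heq : (fun k => V ((fun n : ℕ => ∏ p ∈ n.primesBelow, ∑' e : ℕ, f (p ^ e))
        (Nat.nth Nat.Prime k)))
        = fun k : ℕ => ((List.range k).map fun i =>
          ∑' m : ℕ, T ((m : ℝ) * Real.log (Nat.nth Nat.Prime i))).prod := by
      funext k
      exact hprod k
    rw [← hAsum]
    rw [← heq]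
    exact this
end


/-- **Quantized Euler product for the spectral operator** (Theorem 4.5): for `c > 1`,
given the translation operators `T_h` on `H_c` (characterized by `(T_h f)(t) = f(t − h)`
a.e.), for each prime `p` the local Euler factor `E_p = ∑_{m≥0} T_{m log p}` converges in
operator norm and equals `(I − T_{log p})^{−1}`; moreover the partial products
`E_{p_1} ∘ ⋯ ∘ E_{p_k}` over the primes in increasing order converge in operator norm to
`A = ∑_{n≥1} T_{log n}`. -/
theorem quantized_euler_product (c : ℝ) (hc : 1 < c)
    (T : ℝ → Lp ℂ 2 (weightedMeasure c) →L[ℂ] Lp ℂ 2 (weightedMeasure c))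
    (hT : ∀ (h : ℝ) (f : Lp ℂ 2 (weightedMeasure c)),
      (T h f : ℝ → ℂ) =ᵐ[weightedMeasure c] fun t => f (t - h)) :
    (∀ p : ℕ, p.Prime → Summable (fun m : ℕ => T ((m : ℝ) * Real.log p))) ∧
    (∀ p : ℕ, p.Prime →
      (1 - T (Real.log p)) * (∑' m : ℕ, T ((m : ℝ) * Real.log p)) = 1 ∧
      (∑' m : ℕ, T ((m : ℝ) * Real.log p)) * (1 - T (Real.log p)) = 1) ∧
    Summable (fun n : ℕ => T (Real.log (n + 1))) ∧
    Tendsto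
      (fun k : ℕ =>
        ((List.range k).map fun i =>
          ∑' m : ℕ, T ((m : ℝ) * Real.log (Nat.nth Nat.Prime i))).prod)
      atTop (𝓝 (∑' n : ℕ, T (Real.log (n + 1)))) := by
  have hc0 : (0:ℝ) < c := lt_trans one_pos hc
  have hadd := QEP.T_add hT
  have hzero := QEP.T_zero hT
  have hnorm : ∀ n : ℕ, n ≠ 0 → ‖T (Real.log n)‖ ≤ (n : ℝ) ^ (-c) := by
    intro n hn
    have hpos : (0:ℝ) < n := by exact_mod_cast Nat.pos_of_ne_zero hn
    have : ((n:ℝ)) ^ (-c) = Real.exp (-(c * Real.log n)) := by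
      rw [Real.rpow_def_of_pos hpos]
      ring_nf
    rw [this]
    exact QEP.T_norm_le hT _
  have hlt1 : ∀ p : ℕ, p.Prime → ‖T (Real.log p)‖ < 1 := by
    intro p hp
    refine lt_of_le_of_lt (hnorm p hp.pos.ne') ?_
    exact Real.rpow_lt_one_of_one_lt_of_neg (by exact_mod_cast hp.one_lt) (by linarith)
  have hpowrw : ∀ p : ℕ, (fun m : ℕ => T ((m : ℝ) * Real.log p)) =
      fun m : ℕ => T (Real.log p) ^ m :=
    fun p => funext fun m => euler_T_pow T hadd hzero _ m
  have hmain := euler_main c hc T hadd hzero hnorm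
  refine ⟨?_, ?_, hmain.1, hmain.2⟩
  · intro p hp
    rw [hpowrw p]
    exact summable_geometric_of_norm_lt_one (hlt1 p hp)
  · intro p hp
    rw [hpowrw p]
    exact ⟨mul_neg_geom_series _ (hlt1 p hp), geom_series_mul_neg _ (hlt1 p hp)⟩
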